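/- Let f : ℝⁿ → ℝ, h : ℝⁿ → ℝ ∪ {+∞}, A : ℝⁿ → ℝˡ linear, b ∈ ℝˡ, and c > 0. Let σ ∈ (0, 1/2), C_σ := 2(1 − σ)²/(1 − 2σ), λ̲ > 0, and κ ≥ 0. Let integers k̂ < k and sequences z_i ∈ ℝⁿ with h(z_i) finite (k̂ ≤ i ≤ k), p_i ∈ ℝˡ (k̂ − 1 ≤ i ≤ k), λ_i ≥ λ̲ and w_i ∈ ℝⁿ (k̂ + 1 ≤ i ≤ k) satisfy: (i) p_i = p_{i−1} + c(A z_i − b) for k̂ ≤ i ≤ k; (ii) ‖p_i‖ ≤ κ for k̂ − 1 ≤ i ≤ k; (iii) ((1 − 2σ)/(2(1 − σ)²)) λ_i ‖w_i‖² ≤ L_c(z_{i−1}; p_{i−1}) − L_c(z_i; p_i) + (1/c)‖p_i − p_{i−1}‖² for k̂ + 1 ≤ i ≤ k. Define Δ_k := (Σ_{i=k̂+1}^{k} λ_i)^{−1}[L_c(z_{k̂}; p_{k̂−1}) − L_c(z_k; p_k) − ‖p_k‖²/(2c)]. Then (Σ_{i=k̂+1}^{k} λ_i ‖w_i‖²)/(Σ_{i=k̂+1}^{k}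 λ_i) ≤ C_σ (Δ_k + 9κ²/(λ̲ c)). -/

import Mathlib

open scoped RealInnerProductSpace

/-- The augmented Lagrangian
`L_c(z; p) := f(z) + h(z) + ⟨p, Az − b⟩ + (c/2)‖Az − b‖²`. -/
noncomputable def augL {n l : ℕ} (f : EuclideanSpace ℝ (Fin n) → ℝ)
    (h : EuclideanSpace ℝ (Fin n) → EReal)
    (A : EuclideanSpace ℝ (Fin n) →ₗ[ℝ] EuclideanSpace ℝ (Fin l))
    (b : EuclideanSpace ℝ (Fin l)) (c : ℝ)
    (z : EuclideanSpace ℝ (Fin n)) (p : EuclideanSpace ℝ (Fin l)) : EReal :=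
  (f z : EReal) + h z + ((⟪p, A z - b⟫ + c / 2 * ‖A z - b‖ ^ 2 : ℝ) : EReal)

private lemma sum_Icc_top' (a b : ℤ) (h : a ≤ b + 1) (f : ℤ → ℝ) :
    ∑ i ∈ Finset.Icc a (b+1), f i = (∑ i ∈ Finset.Icc a b, f i) + f (b+1) := by
  have : Finset.Icc a (b+1) = insert (b+1) (Finset.Icc a b) := by
    ext x; simp [Finset.mem_Icc]; omega
  rw [this, Finset.sum_insert (by simp), add_comm]

private lemma tele' (g : ℤ → ℝ) (a b : ℤ) (hb : a ≤ b) :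
    ∑ i ∈ Finset.Icc (a+1) b, (g (i-1) - g i) = g a - g b := by
  refine Int.le_induction
    (motive := fun b _ => ∑ i ∈ Finset.Icc (a+1) b, (g (i-1) - g i) = g a - g b) ?_ ?_ b hb
  · simp
  · intro n hn ih
    rw [sum_Icc_top' _ _ (by omega), ih]
    have h' : n + 1 - 1 = n := by ring
    rw [h']; ring

private lemma augL_coe {n l : ℕ} (f : EuclideanSpace ℝ (Fin n) → ℝ)
    (h : EuclideanSpace ℝ (Fin n) → EReal)
    (A : EuclideanSpace ℝ (Fin n) →ₗ[ℝ] EuclideanSpace ℝ (Fin l))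
    (b : EuclideanSpace ℝ (Fin l)) (c : ℝ)
    (zz : EuclideanSpace ℝ (Fin n)) (pp : EuclideanSpace ℝ (Fin l))
    (h1 : h zz ≠ ⊤) (h2 : h zz ≠ ⊥) :
    augL f h A b c zz pp =
      ((f zz + (h zz).toReal + (⟪pp, A zz - b⟫ + c / 2 * ‖A zz - b‖ ^ 2) : ℝ) : EReal) := by
  obtain ⟨r, hr⟩ : ∃ r : ℝ, h zz = (r : EReal) := ⟨_, (EReal.coe_toReal h1 h2).symm⟩
  unfold augL
  rw [hr, EReal.toReal_coe]
  norm_cast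
set_option maxHeartbeats 1000000 in
theorem stmt7 {n l : ℕ} (f : EuclideanSpace ℝ (Fin n) → ℝ)
    (h : EuclideanSpace ℝ (Fin n) → EReal)
    (A : EuclideanSpace ℝ (Fin n) →ₗ[ℝ] EuclideanSpace ℝ (Fin l))
    (b : EuclideanSpace ℝ (Fin l)) (c : ℝ) (hc : 0 < c)
    (σ : ℝ) (hσ1 : 0 < σ) (hσ2 : σ < 1 / 2)
    (Cσ : ℝ) (hCσ : Cσ = 2 * (1 - σ) ^ 2 / (1 - 2 * σ))
    (lamLB κ : ℝ) (hlamLB : 0 < lamLB) (hκ : 0 ≤ κ)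
    (khat k : ℤ) (hkhatk : khat < k)
    (z : ℤ → EuclideanSpace ℝ (Fin n)) (p : ℤ → EuclideanSpace ℝ (Fin l))
    (lam : ℤ → ℝ) (w : ℤ → EuclideanSpace ℝ (Fin n))
    (hzfin : ∀ i, khat ≤ i → i ≤ k → h (z i) ≠ ⊤ ∧ h (z i) ≠ ⊥)
    (hlam : ∀ i, khat + 1 ≤ i → i ≤ k → lamLB ≤ lam i)
    (hupdate : ∀ i, khat ≤ i → i ≤ k → p i = p (i - 1) + c • (A (z i) - b))
    (hpbd : ∀ i, khat - 1 ≤ i → i ≤ k → ‖p i‖ ≤ κ)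
    (hdescent : ∀ i, khat + 1 ≤ i → i ≤ k →
      (((1 - 2 * σ) / (2 * (1 - σ) ^ 2) * lam i * ‖w i‖ ^ 2 : ℝ) : EReal) ≤
        augL f h A b c (z (i - 1)) (p (i - 1)) - augL f h A b c (z i) (p i)
          + ((1 / c * ‖p i - p (i - 1)‖ ^ 2 : ℝ) : EReal))
    (Δ : EReal)
    (hΔ : Δ = (((∑ i ∈ Finset.Icc (khat + 1) k, lam i)⁻¹ : ℝ) : EReal) *
      (augL f h A b c (z khat) (p (khat - 1)) - augL f h A b c (z k) (p k)
        - ((‖p k‖ ^ 2 / (2 * c) : ℝ) : EReal))) :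
    (((∑ i ∈ Finset.Icc (khat + 1) k, lam i * ‖w i‖ ^ 2) /
        (∑ i ∈ Finset.Icc (khat + 1) k, lam i) : ℝ) : EReal) ≤
      (Cσ : EReal) * (Δ + ((9 * κ ^ 2 / (lamLB * c) : ℝ) : EReal)) := by
  set D : ℝ := (1 - 2 * σ) / (2 * (1 - σ) ^ 2) with hDdef
  have hs1 : (0:ℝ) < 1 - 2 * σ := by linarith
  have hs2 : (0:ℝ) < 2 * (1 - σ) ^ 2 := by nlinarith
  have hD0 : 0 < D := div_pos hs1 hs2
  have hCσ0 : 0 < Cσ := by rw [hCσ]; exact div_pos (by nlinarith) hs1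
  have hCD : Cσ * D = 1 := by
    rw [hCσ, hDdef]; field_simp; exact div_self (ne_of_gt (by linarith))
  set ℓ : ℤ → ℝ := fun i =>
    f (z i) + (h (z i)).toReal + (⟪p i, A (z i) - b⟫ + c / 2 * ‖A (z i) - b‖ ^ 2) with hℓ
  have hAco : ∀ i, khat ≤ i → i ≤ k →
      augL f h A b c (z i) (p i) = ((ℓ i : ℝ) : EReal) := by
    intro i h1 h2
    simp only [hℓ]
    exact augL_coe f h A b c (z i) (p i) (hzfin i h1 h2).1 (hzfin i h1 h2).2
  set ℓ' : ℝ := f (z khat) + (h (z khat)).toReal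
    + (⟪p (khat - 1), A (z khat) - b⟫ + c / 2 * ‖A (z khat) - b‖ ^ 2) with hℓ'
  have hAco' : augL f h A b c (z khat) (p (khat - 1)) = ((ℓ' : ℝ) : EReal) := by
    rw [hℓ']
    exact augL_coe f h A b c (z khat) (p (khat - 1))
      (hzfin khat le_rfl hkhatk.le).1 (hzfin khat le_rfl hkhatk.le).2
  set X : ℝ := ∑ i ∈ Finset.Icc (khat + 1) k, lam i * ‖w i‖ ^ 2 with hX
  set S : ℝ := ∑ i ∈ Finset.Icc (khat + 1) k, lam i with hS
  set m : ℝ := ((k - khat).toNat : ℝ) with hm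
  have hm1 : 1 ≤ m := by
    rw [hm]; exact_mod_cast (by omega : 1 ≤ (k - khat).toNat)
  have hcard : ((Finset.Icc (khat + 1) k).card : ℝ) = m := by
    have e : k + 1 - (khat + 1) = k - khat := by ring
    rw [Int.card_Icc, e, hm]
  have hSm : m * lamLB ≤ S := by
    have h1 := Finset.card_nsmul_le_sum (Finset.Icc (khat + 1) k) lam lamLB
      (fun i hi => hlam i (Finset.mem_Icc.mp hi).1 (Finset.mem_Icc.mp hi).2)
    rw [nsmul_eq_mul, hcard] at h1
    exact h1
  have hS0 : 0 < S := lt_of_lt_of_le (by nlinarith) hSm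
  -- real-valued descent inequalities
  have hreal : ∀ i ∈ Finset.Icc (khat + 1) k,
      D * lam i * ‖w i‖ ^ 2 ≤ (ℓ (i - 1) - ℓ i) + 1 / c * ‖p i - p (i - 1)‖ ^ 2 := by
    intro i hi
    rw [Finset.mem_Icc] at hi
    have hd := hdescent i hi.1 hi.2
    rw [hAco i (by omega) hi.2, hAco (i - 1) (by omega) (by omega)] at hd
    exact_mod_cast hd
  -- bound on multiplier differences
  have hdp : ∀ i, khat ≤ i → i ≤ k →
      1 / c * ‖p i - p (i - 1)‖ ^ 2 ≤ 1 / c * (4 * κ ^ 2) := by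
    intro i h1 h2
    have hn : ‖p i - p (i - 1)‖ ≤ 2 * κ := by
      calc ‖p i - p (i - 1)‖ ≤ ‖p i‖ + ‖p (i - 1)‖ := norm_sub_le _ _
        _ ≤ κ + κ := add_le_add (hpbd i (by omega) h2) (hpbd (i - 1) (by omega) (by omega))
        _ = 2 * κ := by ring
    have hsq : ‖p i - p (i - 1)‖ ^ 2 ≤ 4 * κ ^ 2 := by
      nlinarith [norm_nonneg (p i - p (i - 1))]
    exact mul_le_mul_of_nonneg_left hsq (by positivity)
  have hsum_dp : ∑ i ∈ Finset.Icc (khat + 1) k, 1 / c * ‖p i - p (i - 1)‖ ^ 2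
      ≤ m * (1 / c * (4 * κ ^ 2)) := by
    have h1 := Finset.sum_le_card_nsmul (Finset.Icc (khat + 1) k)
      (fun i => 1 / c * ‖p i - p (i - 1)‖ ^ 2) (1 / c * (4 * κ ^ 2))
      (fun i hi => hdp i (by have := Finset.mem_Icc.mp hi; omega) (Finset.mem_Icc.mp hi).2)
    rw [nsmul_eq_mul, hcard] at h1
    exact h1
  -- relating ℓ khat and ℓ'
  have hupk := hupdate khat le_rfl hkhatk.le
  have hlk : ℓ khat = ℓ' + 1 / c * ‖p khat - p (khat - 1)‖ ^ 2 := by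
    have hv : p khat - p (khat - 1) = c • (A (z khat) - b) := by rw [hupk]; abel
    have h1 : ⟪p khat, A (z khat) - b⟫
        = ⟪p (khat - 1), A (z khat) - b⟫ + c * ‖A (z khat) - b‖ ^ 2 := by
      rw [hupk, inner_add_left, real_inner_smul_left, real_inner_self_eq_norm_sq]
    have h2 : ‖p khat - p (khat - 1)‖ ^ 2 = c ^ 2 * ‖A (z khat) - b‖ ^ 2 := by
      rw [hv, norm_smul, Real.norm_eq_abs, abs_of_pos hc, mul_pow]
    simp only [hℓ, hℓ']
    rw [h1, h2]
    field_simp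
    ring
  have hdpk : 1 / c * ‖p khat - p (khat - 1)‖ ^ 2 ≤ 1 / c * (4 * κ ^ 2) :=
    hdp khat le_rfl hkhatk.le
  -- summed inequality
  have hmain : D * X ≤ (ℓ khat - ℓ k) + m * (1 / c * (4 * κ ^ 2)) := by
    have h1 : ∑ i ∈ Finset.Icc (khat + 1) k, (D * lam i * ‖w i‖ ^ 2) ≤
        ∑ i ∈ Finset.Icc (khat + 1) k,
          ((ℓ (i - 1) - ℓ i) + 1 / c * ‖p i - p (i - 1)‖ ^ 2) :=
      Finset.sum_le_sum hreal
    rw [Finset.sum_add_distrib, tele' ℓ khat k hkhatk.le] at h1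
    have h2 : D * X = ∑ i ∈ Finset.Icc (khat + 1) k, (D * lam i * ‖w i‖ ^ 2) := by
      rw [hX, Finset.mul_sum]
      exact Finset.sum_congr rfl fun i _ => (mul_assoc _ _ _).symm
    rw [h2]
    linarith [hsum_dp]
  have hpk2 : ‖p k‖ ^ 2 ≤ κ ^ 2 :=
    pow_le_pow_left₀ (norm_nonneg _) (hpbd k (by omega) le_rfl) 2
  -- key numeric step
  have hinv : (0:ℝ) < 1 / c := by positivity
  have hnum : (m + 1) * (4 * κ ^ 2) + ‖p k‖ ^ 2 / 2 ≤ 9 * m * κ ^ 2 := by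
    nlinarith [mul_nonneg (by linarith : (0:ℝ) ≤ m - 1) (sq_nonneg κ)]
  have hstep : ℓ' - ℓ k + (m + 1) * (1 / c * (4 * κ ^ 2)) ≤
      (ℓ' - ℓ k - ‖p k‖ ^ 2 / (2 * c)) + S * (9 * κ ^ 2 / (lamLB * c)) := by
    have h9 : m * (9 * κ ^ 2 / c) ≤ S * (9 * κ ^ 2 / (lamLB * c)) := by
      have htpos : (0:ℝ) ≤ 9 * κ ^ 2 / (lamLB * c) := by positivity
      have := mul_le_mul_of_nonneg_right hSm htpos
      calc m * (9 * κ ^ 2 / c) = m * lamLB * (9 * κ ^ 2 / (lamLB * c)) := by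
            field_simp
        _ ≤ S * (9 * κ ^ 2 / (lamLB * c)) := this
    have hmm := mul_le_mul_of_nonneg_right hnum hinv.le
    have e1 : ((m + 1) * (4 * κ ^ 2) + ‖p k‖ ^ 2 / 2) * (1 / c)
        = (m + 1) * (1 / c * (4 * κ ^ 2)) + ‖p k‖ ^ 2 / (2 * c) := by
      field_simp
    have e2 : (9 * m * κ ^ 2) * (1 / c) = m * (9 * κ ^ 2 / c) := by ring
    rw [e1, e2] at hmm
    linarith
  have hfin1 : X ≤ Cσ * ((ℓ' - ℓ k - ‖p k‖ ^ 2 / (2 * c)) + S * (9 * κ ^ 2 / (lamLB * c))) := by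
    have hdx : D * X ≤ (ℓ' - ℓ k - ‖p k‖ ^ 2 / (2 * c)) + S * (9 * κ ^ 2 / (lamLB * c)) := by
      have : D * X ≤ ℓ' - ℓ k + (m + 1) * (1 / c * (4 * κ ^ 2)) := by
        rw [hlk] at hmain; linarith
      linarith
    calc X = Cσ * (D * X) := by rw [← mul_assoc, hCD, one_mul]
      _ ≤ _ := mul_le_mul_of_nonneg_left hdx hCσ0.le
  have hfin : X / S ≤ Cσ * (S⁻¹ * (ℓ' - ℓ k - ‖p k‖ ^ 2 / (2 * c)) + 9 * κ ^ 2 / (lamLB * c)) := by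
    have h2 : X / S ≤ (Cσ * ((ℓ' - ℓ k - ‖p k‖ ^ 2 / (2 * c)) + S * (9 * κ ^ 2 / (lamLB * c)))) / S := by
      gcongr
    have h3 : (Cσ * ((ℓ' - ℓ k - ‖p k‖ ^ 2 / (2 * c)) + S * (9 * κ ^ 2 / (lamLB * c)))) / S
        = Cσ * (S⁻¹ * (ℓ' - ℓ k - ‖p k‖ ^ 2 / (2 * c)) + 9 * κ ^ 2 / (lamLB * c)) := by
      field_simp
    linarith [h3.le, h3.ge]
  -- conclude in EReal
  rw [hΔ, hAco', hAco k hkhatk.le le_rfl]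
  have hcast : ((S⁻¹ : ℝ) : EReal) * (((ℓ' : ℝ) : EReal) - ((ℓ k : ℝ) : EReal)
      - ((‖p k‖ ^ 2 / (2 * c) : ℝ) : EReal))
      = ((S⁻¹ * (ℓ' - ℓ k - ‖p k‖ ^ 2 / (2 * c)) : ℝ) : EReal) := by norm_cast
  rw [hcast]
  exact_mod_cast hfin
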